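/- Let k be an algebraically closed field of characteristic zero, d ≥ 2 a natural number, and F a subgroup of the symmetric group of Fin d such that for any two 2-element subsets A, B of Fin d there exists σ ∈ F with σ(A) = B. Let G be the subgroup of GL(Fin d → k) consisting of all linear automorphisms g for which there exist σ ∈ F and t : Fin d → kˣ with g(e_i) = t(i) · e_{σ(i)} for all i, where (e_i) is the standard basis of Fin d → k. Then the representation of G on the exterior square ⋀²(Fin d → k), where g ∈ G acts by the induced map x ∧ y ↦ g(x) ∧ g(y), is irreducible. -/

import Mathlib

namespace SmallRep
open ExteriorAlgebra Finset
set_option linter.unusedSectionVars false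
section Aux
variable (k : Type*) [Field k] (d : ℕ)

noncomputable def wv (i j : Fin d) : ExteriorAlgebra k (Fin d → k) :=
  ι k (Pi.single i 1) * ι k (Pi.single j 1)

lemma wv_mem (i j : Fin d) : wv k d i j ∈ ⋀[k]^2 (Fin d → k) := by
  rw [exteriorPower, pow_two]
  exact Submodule.mul_mem_mul (LinearMap.mem_range_self _ _) (LinearMap.mem_range_self _ _)

lemma single_eq_smul (i : Fin d) (c : k) :
    Pi.single i c = c • (Pi.single i 1 : Fin d → k) := by
  rw [← Pi.single_smul, smul_eq_mul, mul_one]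

lemma eq_sum_single (x : Fin d → k) : x = ∑ i, x i • (Pi.single i 1 : Fin d → k) := by
  conv_lhs => rw [← Finset.univ_sum_single x]
  exact Finset.sum_congr rfl fun i _ => single_eq_smul k d i (x i)

lemma mul_mem_span (x y : Fin d → k) :
    ι k x * ι k y ∈
      Submodule.span k (Set.range fun p : Fin d × Fin d => wv k d p.1 p.2) := by
  rw [eq_sum_single k d x, eq_sum_single k d y, map_sum, map_sum, Finset.sum_mul]
  refine Submodule.sum_mem _ fun i _ => ?_
  rw [Finset.mul_sum]
  refine Submodule.sum_mem _ fun j _ => ?_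
  rw [map_smul, map_smul, smul_mul_smul_comm]
  exact Submodule.smul_mem _ _ (Submodule.subset_span ⟨(i, j), rfl⟩)

lemma span_wv :
    Submodule.span k (Set.range fun p : Fin d × Fin d => wv k d p.1 p.2)
      = ⋀[k]^2 (Fin d → k) := by
  refine le_antisymm (Submodule.span_le.2 ?_) ?_
  · rintro _ ⟨⟨i, j⟩, rfl⟩; exact wv_mem k d i j
  · rw [← ιMulti_span_fixedDegree]
    refine Submodule.span_le.2 ?_
    rintro _ ⟨v, rfl⟩
    have hprod : ιMulti k 2 v = ι k (v 0) * ι k (v 1) := by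
      simp [ιMulti_apply, List.ofFn_succ, Matrix.vecTail, Function.comp, Fin.succ_zero_eq_one]
    rw [hprod]
    exact mul_mem_span k d _ _


noncomputable def gdiag (t : Fin d → kˣ) : (Fin d → k) ≃ₗ[k] (Fin d → k) :=
  LinearEquiv.piCongrRight fun i => LinearEquiv.smulOfUnit (t i)

lemma gdiag_single (t : Fin d → kˣ) (i : Fin d) :
    gdiag k d t (Pi.single i 1) = (t i : k) • (Pi.single i 1 : Fin d → k) := by
  ext j
  rcases eq_or_ne j i with rfl | h
  · simp [gdiag, LinearEquiv.smulOfUnit, Units.smul_def]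
  · simp [gdiag, LinearEquiv.smulOfUnit, Pi.single_eq_of_ne h]

lemma map_wv_diag (t : Fin d → kˣ) (i j : Fin d) :
    ExteriorAlgebra.map (gdiag k d t).toLinearMap (wv k d i j)
      = ((t i : k) * (t j : k)) • wv k d i j := by
  rw [wv, map_mul, map_apply_ι, map_apply_ι, LinearEquiv.coe_coe, gdiag_single, gdiag_single,
    map_smul, map_smul, smul_mul_smul_comm]

def gperm (σ : Equiv.Perm (Fin d)) : (Fin d → k) ≃ₗ[k] (Fin d → k) :=
  LinearEquiv.piCongrLeft' k (fun _ => k) σ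

lemma gperm_single (σ : Equiv.Perm (Fin d)) (i : Fin d) :
    gperm k d σ (Pi.single i 1) = Pi.single (σ i) 1 := by
  ext j
  simp only [gperm, LinearEquiv.piCongrLeft'_apply, Pi.single_apply]
  rcases eq_or_ne ((Equiv.symm σ) j) i with h | h
  · simp [h, (Equiv.symm_apply_eq σ).mp h]
  · have h2 : j ≠ σ i := fun hc => h (by rw [hc]; simp)
    simp [h, h2]

lemma map_wv_perm (σ : Equiv.Perm (Fin d)) (i j : Fin d) :
    ExteriorAlgebra.map (gperm k d σ).toLinearMap (wv k d i j) = wv k d (σ i) (σ j) := by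
  rw [wv, map_mul, map_apply_ι, map_apply_ι, LinearEquiv.coe_coe, gperm_single, gperm_single, wv]

def scal (a i j : Fin d) : k :=
  (if i = a then (2:k) else 1) * (if j = a then 2 else 1) - 1

variable [CharZero k]

noncomputable def tf (a : Fin d) : Fin d → kˣ :=
  fun i => if i = a then Units.mk0 (2:k) two_ne_zero else 1

lemma tf_val (a i : Fin d) : ((tf k d a i : k)) = if i = a then (2:k) else 1 := by
  rw [tf, apply_ite (Units.val)]
  simp

noncomputable def Pmap (a : Fin d) :
    ExteriorAlgebra k (Fin d → k) →ₗ[k] ExteriorAlgebra k (Fin d → k) :=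
  (ExteriorAlgebra.map (gdiag k d (tf k d a)).toLinearMap).toLinearMap - LinearMap.id

lemma Pmap_apply (a : Fin d) (w : ExteriorAlgebra k (Fin d → k)) :
    Pmap k d a w = ExteriorAlgebra.map (gdiag k d (tf k d a)).toLinearMap w - w := rfl

lemma Pmap_wv (a i j : Fin d) :
    Pmap k d a (wv k d i j) = scal k d a i j • wv k d i j := by
  rw [Pmap_apply, map_wv_diag, tf_val, tf_val, scal, sub_smul, one_smul]


lemma scal_eq {i j : Fin d} (hij : i ≠ j) (a : Fin d) :
    scal k d a i j = (if a = i then (1:k) else 0) + (if a = j then 1 else 0) := by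
  rcases eq_or_ne a i with rfl | hai
  · rw [scal, if_pos rfl, if_neg (fun h => hij h.symm), if_pos rfl, if_neg (fun h => hij h)]
    norm_num
  · rcases eq_or_ne a j with rfl | haj
    · rw [scal, if_neg (fun h => hai h.symm), if_pos rfl, if_neg hai, if_pos rfl]
      norm_num
    · rw [scal, if_neg (fun h => hai h.symm), if_neg (fun h => haj h.symm),
        if_neg hai, if_neg haj]
      norm_num

lemma sum_scal {i j : Fin d} (hij : i ≠ j) : ∑ a, scal k d a i j = 2 := by
  simp only [scal_eq k d hij]
  rw [Finset.sum_add_distrib]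
  simp [Finset.sum_ite_eq']
  norm_num

lemma sum_scal_sq {i j : Fin d} (hij : i ≠ j) :
    ∑ a, scal k d a i j * scal k d a i j = 2 := by
  have h : ∀ a, scal k d a i j * scal k d a i j = scal k d a i j := by
    intro a
    rw [scal_eq k d hij a]
    rcases eq_or_ne a i with rfl | hai
    · rw [if_pos rfl, if_neg hij]; ring
    · rcases eq_or_ne a j with rfl | haj
      · rw [if_neg hai, if_pos rfl]; ring
      · rw [if_neg hai, if_neg haj]; ring
  simp only [h]
  exact sum_scal k d hij

lemma sum_sum_scal {i j : Fin d} (hij : i ≠ j) :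
    ∑ a, ∑ b ∈ univ.erase a, scal k d b i j * scal k d a i j = 2 := by
  have h1 : ∀ a : Fin d, ∑ b ∈ univ.erase a, scal k d b i j * scal k d a i j
      = (2 - scal k d a i j) * scal k d a i j := by
    intro a
    rw [← Finset.sum_mul, Finset.sum_erase_eq_sub (mem_univ a), sum_scal k d hij]
  simp only [h1, sub_mul]
  rw [Finset.sum_sub_distrib, ← Finset.mul_sum, sum_scal k d hij, sum_scal_sq k d hij]
  norm_num

lemma scal_cases {i j a : Fin d} (hij : i ≠ j) (h : scal k d a i j ≠ 0) : a = i ∨ a = j := by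
  by_contra hc
  push_neg at hc
  apply h
  rw [scal_eq k d hij, if_neg hc.1, if_neg hc.2, add_zero]

lemma wv_same (i : Fin d) : wv k d i i = 0 := ι_sq_zero _

lemma wv_swap (i j : Fin d) : wv k d j i = - wv k d i j :=
  eq_neg_of_add_eq_zero_left (ι_add_mul_swap _ _)

lemma sum_Pmap_wv (i j : Fin d) :
    ∑ a, ∑ b ∈ univ.erase a, Pmap k d a (Pmap k d b (wv k d i j))
      = (2:k) • wv k d i j := by
  have key : ∀ a b : Fin d, Pmap k d a (Pmap k d b (wv k d i j))
      = (scal k d b i j * scal k d a i j) • wv k d i j := by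
    intro a b
    rw [Pmap_wv, map_smul, Pmap_wv, smul_smul]
  simp only [key, ← Finset.sum_smul]
  rcases eq_or_ne i j with rfl | hij
  · rw [wv_same]; simp
  · rw [sum_sum_scal k d hij]

lemma sum_Pmap_eq (w : ExteriorAlgebra k (Fin d → k)) (hw : w ∈ ⋀[k]^2 (Fin d → k)) :
    ∑ a, ∑ b ∈ univ.erase a, Pmap k d a (Pmap k d b w) = (2:k) • w := by
  classical
  set L : ExteriorAlgebra k (Fin d → k) →ₗ[k] ExteriorAlgebra k (Fin d → k) :=
    ∑ a, ∑ b ∈ univ.erase a, (Pmap k d a).comp (Pmap k d b) with hLdef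
  have hL : ∀ u, L u = ∑ a, ∑ b ∈ univ.erase a, Pmap k d a (Pmap k d b u) := by
    intro u
    rw [hLdef]
    simp [LinearMap.sum_apply]
  have hle : ⋀[k]^2 (Fin d → k) ≤ LinearMap.eqLocus L ((2:k) • LinearMap.id) := by
    rw [← span_wv, Submodule.span_le]
    rintro _ ⟨⟨i, j⟩, rfl⟩
    rw [SetLike.mem_coe, LinearMap.mem_eqLocus, hL, sum_Pmap_wv]
    simp
  have h2 := hle hw
  rw [LinearMap.mem_eqLocus] at h2
  rw [← hL w, h2]
  simp

lemma Pmap_Pmap_mem (a b : Fin d) (hab : a ≠ b) (w : ExteriorAlgebra k (Fin d → k))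
    (hw : w ∈ ⋀[k]^2 (Fin d → k)) :
    Pmap k d a (Pmap k d b w) ∈ Submodule.span k {wv k d a b} := by
  have hle : ⋀[k]^2 (Fin d → k) ≤
      Submodule.comap ((Pmap k d a).comp (Pmap k d b)) (Submodule.span k {wv k d a b}) := by
    rw [← span_wv, Submodule.span_le]
    rintro _ ⟨⟨i, j⟩, rfl⟩
    simp only [SetLike.mem_coe, Submodule.mem_comap, LinearMap.comp_apply]
    rw [Pmap_wv, map_smul, Pmap_wv, smul_smul]
    rcases eq_or_ne i j with rfl | hij
    · rw [wv_same]
      simp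
    by_cases hb : scal k d b i j = 0
    · rw [hb]
      simp
    by_cases ha : scal k d a i j = 0
    · rw [ha]
      simp
    refine Submodule.smul_mem _ _ ?_
    rcases scal_cases k d hij ha with rfl | rfl
    · rcases scal_cases k d hij hb with h | rfl
      · exact absurd h.symm hab
      · exact Submodule.mem_span_singleton_self _
    · rcases scal_cases k d hij hb with rfl | h
      · rw [wv_swap k d a b]
        exact Submodule.neg_mem _ (Submodule.mem_span_singleton_self _)
      · exact absurd h.symm hab
  have h2 := hle hw
  rwa [Submodule.mem_comap, LinearMap.comp_apply] at h2

lemma wv_ne_zero (hd : 2 ≤ d) :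
    wv k d ⟨0, by omega⟩ ⟨1, by omega⟩ ≠ 0 := by
  classical
  set i0 : Fin d := ⟨0, by omega⟩ with hi0
  set i1 : Fin d := ⟨1, by omega⟩ with hi1
  let B : (Fin d → k) [⋀^Fin 2]→ₗ[k] k :=
    (Matrix.detRowAlternating : (Fin 2 → k) [⋀^Fin 2]→ₗ[k] k).compLinearMap
      (LinearMap.funLeft k k (Fin.castLE hd))
  let f : ∀ n, (Fin d → k) [⋀^Fin n]→ₗ[k] k := fun n =>
    match n with
    | 2 => B
    | _ => 0
  intro h
  have h1 : liftAlternating f (wv k d i0 i1)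
      = B ![Pi.single i0 1, Pi.single i1 1] := by
    rw [wv, liftAlternating_ι_mul, liftAlternating_ι]
    rfl
  have h2 : B ![Pi.single i0 1, Pi.single i1 1] = 1 := by
    show Matrix.det (Matrix.of fun p q =>
      (![(Pi.single i0 1 : Fin d → k), Pi.single i1 1] p) (Fin.castLE hd q)) = 1
    rw [Matrix.det_fin_two]
    simp only [Matrix.of_apply, Matrix.cons_val_zero, Matrix.cons_val_one, Pi.single_apply, Fin.ext_iff, Fin.coe_castLE, hi0, hi1]
    norm_num
  rw [h, map_zero] at h1
  rw [← h1] at h2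
  exact one_ne_zero h2.symm

end Aux

theorem monomial_group_exterior_square_irreducible
    (k : Type*) [Field k] [IsAlgClosed k] [CharZero k] (d : ℕ) (hd : 2 ≤ d)
    (F : Subgroup (Equiv.Perm (Fin d)))
    (h2hom : ∀ A B : Finset (Fin d), A.card = 2 → B.card = 2 → ∃ σ ∈ F, A.image σ = B) :
    (⋀[k]^2 (Fin d → k)) ≠ ⊥ ∧
    ∀ U : Submodule k (ExteriorAlgebra k (Fin d → k)), U ≤ ⋀[k]^2 (Fin d → k) →
      (∀ g : (Fin d → k) ≃ₗ[k] (Fin d → k),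
        (∃ σ ∈ F, ∃ t : Fin d → kˣ,
          ∀ i : Fin d, g (Pi.single i (1 : k)) = (t i : k) • (Pi.single (σ i) (1 : k) : Fin d → k)) →
        ∀ w ∈ U, ExteriorAlgebra.map g.toLinearMap w ∈ U) →
      U = ⊥ ∨ U = ⋀[k]^2 (Fin d → k) := by
  classical
  constructor
  · rw [Submodule.ne_bot_iff]
    exact ⟨wv k d ⟨0, by omega⟩ ⟨1, by omega⟩, wv_mem k d _ _, wv_ne_zero k d hd⟩
  · intro U hUle hinv
    by_cases hUbot : U = ⊥
    · exact Or.inl hUbot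
    right
    obtain ⟨w, hwU, hw0⟩ := (Submodule.ne_bot_iff U).1 hUbot
    have hdiagmem : ∀ t : Fin d → kˣ, ∀ u ∈ U,
        ExteriorAlgebra.map (gdiag k d t).toLinearMap u ∈ U := by
      intro t
      refine hinv (gdiag k d t) ⟨1, F.one_mem, t, fun i => ?_⟩
      rw [gdiag_single]
      rfl
    have hPU : ∀ a : Fin d, ∀ u ∈ U, Pmap k d a u ∈ U := by
      intro a u hu
      rw [Pmap_apply]
      exact sub_mem (hdiagmem _ _ hu) hu
    have hsum := sum_Pmap_eq k d w (hUle hwU)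
    have hne : ∃ a : Fin d, ∃ b ∈ univ.erase a, Pmap k d a (Pmap k d b w) ≠ 0 := by
      by_contra hc
      push_neg at hc
      rw [Finset.sum_eq_zero (fun a _ => Finset.sum_eq_zero (fun b hb => hc a b hb))] at hsum
      exact hw0 ((smul_eq_zero.mp hsum.symm).resolve_left two_ne_zero)
    obtain ⟨a, b, hbmem, hPne⟩ := hne
    have hab : a ≠ b := Ne.symm (Finset.mem_erase.mp hbmem).1
    have hmem := Pmap_Pmap_mem k d a b hab w (hUle hwU)
    obtain ⟨c, hc⟩ := Submodule.mem_span_singleton.mp hmem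
    have hc0 : c ≠ 0 := fun h => hPne (by rw [← hc, h, zero_smul])
    have hPabU : Pmap k d a (Pmap k d b w) ∈ U := hPU a _ (hPU b _ hwU)
    have hwvab : wv k d a b ∈ U := by
      have h1 : c⁻¹ • (c • wv k d a b) ∈ U := Submodule.smul_mem _ _ (hc ▸ hPabU)
      rwa [smul_smul, inv_mul_cancel₀ hc0, one_smul] at h1
    have hall : ∀ i j : Fin d, i ≠ j → wv k d i j ∈ U := by
      intro i j hij
      obtain ⟨σ, hσF, hσ⟩ := h2hom {a, b} {i, j} (Finset.card_pair hab) (Finset.card_pair hij)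
      have hgmem : ∀ u ∈ U, ExteriorAlgebra.map (gperm k d σ).toLinearMap u ∈ U := by
        refine hinv (gperm k d σ) ⟨σ, hσF, fun _ => 1, fun m => ?_⟩
        rw [gperm_single]
        simp
      have himg : ({σ a, σ b} : Finset (Fin d)) = {i, j} := by
        rw [← hσ, Finset.image_insert, Finset.image_singleton]
      have hmem2 : wv k d (σ a) (σ b) ∈ U := by
        have h2 := hgmem _ hwvab
        rwa [map_wv_perm] at h2
      have hσa : σ a = i ∨ σ a = j := by
        have h3 : σ a ∈ ({i, j} : Finset (Fin d)) := himg ▸ Finset.mem_insert_self _ _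
        simpa using h3
      have hσb : σ b = i ∨ σ b = j := by
        have h3 : σ b ∈ ({i, j} : Finset (Fin d)) := himg ▸ (by simp)
        simpa using h3
      have hσab : σ a ≠ σ b := fun h => hab (σ.injective h)
      rcases hσa with h1 | h1 <;> rcases hσb with h2 | h2
      · exact absurd (h1.trans h2.symm) hσab
      · rwa [h1, h2] at hmem2
      · rw [h1, h2] at hmem2
        rw [wv_swap k d j i]
        exact Submodule.neg_mem _ hmem2
      · exact absurd (h1.trans h2.symm) hσab
    have hge : ⋀[k]^2 (Fin d → k) ≤ U := by
      rw [← span_wv, Submodule.span_le]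
      rintro _ ⟨⟨i, j⟩, rfl⟩
      show wv k d i j ∈ U
      rcases eq_or_ne i j with rfl | hij
      · rw [wv_same]
        exact zero_mem U
      · exact hall i j hij
    exact le_antisymm hUle hge

end SmallRep
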